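/- Let G. be a simplicial group with face maps ∂_i and degeneracies s_j, and suppose the complex of subgroups {Γ^{n-2}_{n-1}}_{n≥1} with differential ∂_{n-1} is exact (i.e., G. is a resolution). Let Γ^k_m = ∩_{i=0}^{k} ker(∂_i). Then H_2 of the chain complex D_* (with D_n = H_1(BΓ^{n-2}_{n-1}) = (Γ^{n-2}_{n-1})_{ab} ⊗ ℚ and differential induced by ∂_{n-1}) equals (Γ^0_0 ∩ [Γ_0, Γ_0]) / [Γ^0_0, Γ^0_0] ⊗ ℚ, which by Hopf's formula computes H_2(Bπ; ℚ) where π = π_0(G.). -/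

import Mathlib

set_option maxHeartbeats 1000000
set_option synthInstance.maxHeartbeats 400000

open scoped TensorProduct

/-- The map `H_1(BH;ℚ) → H_1(BK;ℚ)`, i.e. `ℚ ⊗ H_ab → ℚ ⊗ K_ab`, induced by a
group homomorphism `f : H → K`. -/
noncomputable def h1Map {H K : Type*} [Group H] [Group K] (f : H →* K) :
    ℚ ⊗[ℤ] Additive (Abelianization H) →ₗ[ℤ] ℚ ⊗[ℤ] Additive (Abelianization K) :=
  TensorProduct.map LinearMap.id
    ((MonoidHom.toAdditive (Abelianization.map f)).toIntLinearMap)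

instance : Module.Flat ℤ ℚ := IsLocalization.flat ℚ (nonZeroDivisors ℤ)

namespace Statement10Aux

variable {G H K : Type*} [Group G] [Group H] [Group K]

/-- The map on rationalized abelianizations, pre-tensor version. -/
noncomputable def ab (f : G →* H) :
    Additive (Abelianization G) →ₗ[ℤ] Additive (Abelianization H) :=
  (MonoidHom.toAdditive (Abelianization.map f)).toIntLinearMap

lemma h1Map_eq (f : G →* H) : h1Map f = LinearMap.lTensor ℚ (ab f) := rfl

lemma ab_comp (f : G →* H) (g : H →* K) : ab (g.comp f) = (ab g) ∘ₗ (ab f) := by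
  have h : Abelianization.map (g.comp f) = (Abelianization.map g).comp (Abelianization.map f) :=
    Abelianization.hom_ext _ _ (by ext x; simp)
  unfold ab; rw [h]; rfl

lemma h1Map_comp (f : G →* H) (g : H →* K) : h1Map (g.comp f) = h1Map g ∘ₗ h1Map f := by
  rw [h1Map_eq, h1Map_eq, h1Map_eq, ab_comp, LinearMap.lTensor_comp]; rfl

lemma of_surjective : Function.Surjective (Abelianization.of : G → Abelianization G) :=
  QuotientGroup.mk'_surjective _

lemma ab_apply_of (f : G →* H) (x : G) :
    ab f (Additive.ofMul (Abelianization.of x)) = Additive.ofMul (Abelianization.of (f x)) := by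
  show Additive.ofMul (Abelianization.map f (Abelianization.of x)) = _
  rw [Abelianization.map_of]

lemma ab_surj (g : G →* H) (hg : Function.Surjective g) : Function.Surjective (ab g) := by
  intro y
  obtain ⟨h, hh⟩ := of_surjective (Additive.toMul y)
  obtain ⟨x, rfl⟩ := hg h
  refine ⟨Additive.ofMul (Abelianization.of x), ?_⟩
  rw [ab_apply_of, hh]
  simp

lemma ab_exact (f : G →* H) (g : H →* K) (hc : ∀ x, g (f x) = 1)
    (hg : Function.Surjective g) (he : ∀ y, g y = 1 → ∃ x, f x = y) :
    Function.Exact (ab f) (ab g) := by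
  intro y
  obtain ⟨n, hn⟩ := of_surjective (Additive.toMul y)
  have hyn : y = Additive.ofMul (Abelianization.of n) := by
    rw [hn]; simp
  constructor
  · intro hy
    have h0 : Additive.ofMul (Abelianization.of (g n)) = 0 := by
      rw [← ab_apply_of g n, ← hyn]; exact hy
    have h1 : (g n) ∈ commutator K := by
      rw [ofMul_eq_zero] at h0
      exact (QuotientGroup.eq_one_iff _).mp h0
    have hcomm : commutator K = Subgroup.map g (commutator H) := by
      rw [commutator_def, commutator_def, Subgroup.map_commutator,
        Subgroup.map_top_of_surjective g hg]
    rw [hcomm] at h1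
    obtain ⟨c, hc1, hc2⟩ := h1
    have hker : g (c⁻¹ * n) = 1 := by
      rw [map_mul, map_inv, hc2]
      simp
    obtain ⟨m, hm⟩ := he _ hker
    refine ⟨Additive.ofMul (Abelianization.of m), ?_⟩
    rw [ab_apply_of, hm]
    have hcc : Abelianization.of c = 1 := (QuotientGroup.eq_one_iff c).mpr hc1
    rw [map_mul, map_inv, hcc, hyn]
    simp
  · rintro ⟨x, rfl⟩
    obtain ⟨m, hm⟩ := of_surjective (Additive.toMul x)
    have hx : x = Additive.ofMul (Abelianization.of m) := by rw [hm]; simp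
    rw [hx, ab_apply_of, ab_apply_of, hc m]
    simp [ofMul_eq_zero]

end Statement10Aux

open Statement10Aux

theorem statement10
    (G : ℕ → Type*) [∀ n, Group (G n)] [∀ n, IsFreeGroup (G n)]
    (d : ∀ n, ℕ → (G (n + 1) →* G n))
    (s : ∀ n, ℕ → (G n →* G (n + 1)))
    -- simplicial identities
    (hdd : ∀ n, ∀ i j : ℕ, i < j → j ≤ n + 2 →
      ∀ x : G (n + 2), d n i (d (n + 1) j x) = d n (j - 1) (d (n + 1) i x))
    (hds_lt : ∀ n, ∀ i j : ℕ, i < j → j ≤ n + 1 →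
      ∀ x : G (n + 1), d (n + 1) i (s (n + 1) j x) = s n (j - 1) (d n i x))
    (hds_eq : ∀ n, ∀ j : ℕ, j ≤ n → ∀ x : G n, d n j (s n j x) = x)
    (hds_eq' : ∀ n, ∀ j : ℕ, j ≤ n → ∀ x : G n, d n (j + 1) (s n j x) = x)
    (hds_gt : ∀ n, ∀ i j : ℕ, j + 1 < i → i ≤ n + 2 →
      ∀ x : G (n + 1), d (n + 1) i (s (n + 1) j x) = s n j (d n (i - 1) x))
    (hss : ∀ n, ∀ i j : ℕ, i ≤ j → j ≤ n →
      ∀ x : G n, s (n + 1) i (s n j x) = s (n + 1) (j + 1) (s n i x))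
    -- resolution: the higher homotopy groups of `G.` vanish
    (hres : ∀ m, ∀ x : G (m + 1), (∀ i ≤ m + 1, d m i x = 1) →
      ∃ y : G (m + 2), (∀ i ≤ m + 1, d (m + 1) i y = 1) ∧ d (m + 1) (m + 2) y = x) :
    ∀ δ3 : ↥(MonoidHom.ker (d 1 0) ⊓ MonoidHom.ker (d 1 1)) →* ↥(MonoidHom.ker (d 0 0)),
      (∀ x, (δ3 x : G 1) = d 1 2 (x : G 2)) →
      Nonempty (
        ((↥(AddMonoidHom.ker
              ((h1Map ((d 0 1).comp (MonoidHom.ker (d 0 0)).subtype)).toAddMonoidHom)))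
          ⧸ ((AddMonoidHom.range ((h1Map δ3).toAddMonoidHom)).addSubgroupOf
              (AddMonoidHom.ker
                ((h1Map ((d 0 1).comp (MonoidHom.ker (d 0 0)).subtype)).toAddMonoidHom))))
        ≃+
        (ℚ ⊗[ℤ] Additive (Abelianization
          (↥((commutator (G 0)).comap
                (Subgroup.map (d 0 1) (MonoidHom.ker (d 0 0))).subtype)
            ⧸ ((commutator ↥(Subgroup.map (d 0 1) (MonoidHom.ker (d 0 0)))).comap
                ((commutator (G 0)).comap
                  (Subgroup.map (d 0 1) (MonoidHom.ker (d 0 0))).subtype).subtype)))))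
      := by
  intro δ3 hδ3
  classical
  let N : Subgroup (G 1) := MonoidHom.ker (d 0 0)
  let R' : Subgroup (G 0) := Subgroup.map (d 0 1) N
  let f₀ : ↥N →* ↥R' := (d 0 1).subgroupMap N
  have hfact : (d 0 1).comp N.subtype = R'.subtype.comp f₀ := by ext x; rfl
  -- group-level exactness facts
  have hc : ∀ x, f₀ (δ3 x) = 1 := by
    intro x
    have h2 : d 1 1 (x : G 2) = 1 := (Subgroup.mem_inf.mp x.2).2
    apply Subtype.ext
    show d 0 1 ((δ3 x : G 1)) = 1
    rw [hδ3 x]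
    have h21 : (2 : ℕ) - 1 = 1 := rfl
    have hh := hdd 0 1 2 (by norm_num) (by norm_num) (x : G 2)
    rw [h21] at hh
    rw [hh, h2, map_one]
  have hf₀surj : Function.Surjective f₀ := MonoidHom.subgroupMap_surjective _ _
  have hex : ∀ y : ↥N, f₀ y = 1 → ∃ x, δ3 x = y := by
    intro y hy
    have h0 : d 0 0 (y : G 1) = 1 := y.2
    have h1 : d 0 1 (y : G 1) = 1 := congrArg Subtype.val hy
    obtain ⟨z, hz1, hz2⟩ := hres 0 (y : G 1) (by
      intro i hi
      interval_cases i
      · exact h0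
      · exact h1)
    refine ⟨⟨z, Subgroup.mem_inf.mpr ⟨hz1 0 (by norm_num), hz1 1 (by norm_num)⟩⟩, ?_⟩
    apply Subtype.ext
    rw [hδ3]
    exact hz2
  -- tensored exactness
  have E1 : Function.Exact (ab δ3) (ab f₀) := ab_exact δ3 f₀ hc hf₀surj hex
  have E1T : Function.Exact (h1Map δ3) (h1Map f₀) := by
    rw [h1Map_eq, h1Map_eq]
    exact Module.Flat.lTensor_exact ℚ E1
  have hpsurj : Function.Surjective (h1Map f₀) := by
    rw [h1Map_eq]
    exact LinearMap.lTensor_surjective ℚ (ab_surj f₀ hf₀surj)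
  let ι := h1Map R'.subtype
  have hD2 : h1Map ((d 0 1).comp N.subtype) = ι ∘ₗ h1Map f₀ := by
    rw [hfact, h1Map_comp]
  let Kk : Submodule ℤ (Additive (Abelianization ↥R')) := LinearMap.ker (ab R'.subtype)
  have E2 : Function.Exact (LinearMap.lTensor ℚ Kk.subtype) ι := by
    show Function.Exact _ (LinearMap.lTensor ℚ (ab R'.subtype))
    exact Module.Flat.lTensor_exact ℚ (LinearMap.exact_subtype_ker_map _)
  have hkinj : Function.Injective (LinearMap.lTensor ℚ Kk.subtype) :=
    Module.Flat.lTensor_preserves_injective_linearMap _ (Submodule.injective_subtype Kk)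
  let eK : (ℚ ⊗[ℤ] ↥Kk) ≃ₗ[ℤ] ↥(LinearMap.ker ι) :=
    (LinearEquiv.ofInjective _ hkinj).trans
      (LinearEquiv.ofEq _ _ (LinearMap.exact_iff.mp E2).symm)
  -- the Hopf-type group
  let A : Subgroup ↥R' := (commutator (G 0)).comap R'.subtype
  let Dn : Subgroup ↥A := (commutator ↥R').comap A.subtype
  let ιm : Abelianization ↥R' →* Abelianization (G 0) := Abelianization.map R'.subtype
  let m' : ↥A →* ↥(MonoidHom.ker ιm) :=
    (Abelianization.of.comp A.subtype).codRestrict _ (fun a => by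
      apply MonoidHom.mem_ker.mpr
      show ιm (Abelianization.of ((a : ↥R'))) = 1
      rw [Abelianization.map_of]
      exact (QuotientGroup.eq_one_iff _).mpr a.2)
  have hm'surj : Function.Surjective m' := by
    rintro ⟨y, hy⟩
    obtain ⟨r, rfl⟩ := of_surjective y
    have hr : (r : G 0) ∈ commutator (G 0) := by
      have h : ιm (Abelianization.of r) = 1 := MonoidHom.mem_ker.mp hy
      rw [Abelianization.map_of] at h
      exact (QuotientGroup.eq_one_iff _).mp h
    exact ⟨⟨r, hr⟩, Subtype.ext rfl⟩
  have hkerm' : MonoidHom.ker m' = Dn := by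
    ext a
    constructor
    · intro ha
      have h : Abelianization.of ((a : ↥R')) = 1 :=
        congrArg Subtype.val (MonoidHom.mem_ker.mp ha)
      exact Subgroup.mem_comap.mpr ((QuotientGroup.eq_one_iff _).mp h)
    · intro ha
      exact MonoidHom.mem_ker.mpr
        (Subtype.ext ((QuotientGroup.eq_one_iff _).mpr (Subgroup.mem_comap.mp ha)))
  let Q := ↥A ⧸ Dn
  have hQcomm : ∀ a b : Q, a * b = b * a := by
    intro a b
    refine QuotientGroup.induction_on a fun x => QuotientGroup.induction_on b fun y => ?_
    show ((x * y : ↥A) : ↥A ⧸ Dn) = ((y * x : ↥A) : ↥A ⧸ Dn)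
    rw [QuotientGroup.eq]
    have hcom : (x * y)⁻¹ * (y * x) = @Bracket.bracket ↥A ↥A commutatorElement y⁻¹ x⁻¹ := by
      rw [commutatorElement_def]; group
    rw [hcom]
    apply Subgroup.mem_comap.mpr
    rw [map_commutatorElement, commutator_def]
    exact Subgroup.commutator_mem_commutator (Subgroup.mem_top _) (Subgroup.mem_top _)
  have e2 : Q ≃* ↥(MonoidHom.ker ιm) :=
    (QuotientGroup.quotientMulEquivOfEq hkerm'.symm).trans
      (QuotientGroup.quotientKerEquivOfSurjective m' hm'surj)
  letI instQ : CommGroup Q := { (inferInstance : Group Q) with mul_comm := hQcomm }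
  have e1 : Abelianization Q ≃* Q := Abelianization.equivOfComm.symm
  let e3 : Additive ↥(MonoidHom.ker ιm) ≃+ ↥Kk :=
    { toFun := fun x => ⟨Additive.ofMul ((Additive.toMul x : ↥(MonoidHom.ker ιm)) :
        Abelianization ↥R'), by
          apply LinearMap.mem_ker.mpr
          show Additive.ofMul (ιm ((Additive.toMul x : ↥(MonoidHom.ker ιm)) :
            Abelianization ↥R')) = 0
          rw [ofMul_eq_zero]
          exact MonoidHom.mem_ker.mp (Additive.toMul x).2⟩,
      invFun := fun y => Additive.ofMul (⟨Additive.toMul (y : Additive (Abelianization ↥R')), by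
          apply MonoidHom.mem_ker.mpr
          have hy := LinearMap.mem_ker.mp y.2
          rw [show (ab R'.subtype) (y : Additive (Abelianization ↥R')) =
            Additive.ofMul (ιm (Additive.toMul (y : Additive (Abelianization ↥R')))) from rfl,
            ofMul_eq_zero] at hy
          exact hy⟩ : ↥(MonoidHom.ker ιm)),
      left_inv := fun x => rfl,
      right_inv := fun y => rfl,
      map_add' := fun x y => rfl }
  let eKQ : Additive (Abelianization Q) ≃+ ↥Kk :=
    (MulEquiv.toAdditive (e1.trans e2)).trans e3
  let tq : (ℚ ⊗[ℤ] ↥Kk) ≃ₗ[ℤ] (ℚ ⊗[ℤ] Additive (Abelianization Q)) :=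
    TensorProduct.congr (LinearEquiv.refl ℤ ℚ) eKQ.symm.toIntLinearEquiv
  let Efinal : ↥(LinearMap.ker ι) ≃+ (ℚ ⊗[ℤ] Additive (Abelianization Q)) :=
    (eK.symm.trans tq).toAddEquiv
  -- assembly
  let ker2 := AddMonoidHom.ker ((h1Map ((d 0 1).comp N.subtype)).toAddMonoidHom)
  let p0 : ↥ker2 →+ ↥(LinearMap.ker ι) :=
    { toFun := fun x => ⟨h1Map f₀ (x : ℚ ⊗[ℤ] Additive (Abelianization ↥N)), by
        apply LinearMap.mem_ker.mpr
        have hx : h1Map ((d 0 1).comp N.subtype) (x : _) = 0 := x.2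
        rw [hD2] at hx
        exact hx⟩,
      map_zero' := Subtype.ext (by simp),
      map_add' := fun x y => Subtype.ext (by simp) }
  have hp0surj : Function.Surjective p0 := by
    rintro ⟨z, hz⟩
    obtain ⟨x, hx⟩ := hpsurj z
    have hxmem : x ∈ ker2 := by
      apply AddMonoidHom.mem_ker.mpr
      show h1Map ((d 0 1).comp N.subtype) x = 0
      rw [hD2]
      show ι (h1Map f₀ x) = 0
      rw [hx]
      exact LinearMap.mem_ker.mp hz
    exact ⟨⟨x, hxmem⟩, Subtype.ext hx⟩
  let φ := Efinal.toAddMonoidHom.comp p0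
  have hφsurj : Function.Surjective φ := by
    have h : Function.Surjective (⇑Efinal.toAddMonoidHom ∘ ⇑p0) :=
      Function.Surjective.comp Efinal.surjective hp0surj
    exact h
  have hkerφ : AddMonoidHom.ker φ
      = (AddMonoidHom.range ((h1Map δ3).toAddMonoidHom)).addSubgroupOf ker2 := by
    ext x
    rw [AddMonoidHom.mem_ker, AddSubgroup.mem_addSubgroupOf, AddMonoidHom.mem_range]
    constructor
    · intro hx
      have h1 : p0 x = 0 := by
        apply Efinal.injective
        rw [map_zero]
        exact hx
      have h2 : h1Map f₀ (x : ℚ ⊗[ℤ] Additive (Abelianization ↥N)) = 0 :=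
        congrArg Subtype.val h1
      obtain ⟨y, hy⟩ := (E1T _).mp h2
      exact ⟨y, hy⟩
    · rintro ⟨y, hy⟩
      have h2 : h1Map f₀ (x : ℚ ⊗[ℤ] Additive (Abelianization ↥N)) = 0 :=
        (E1T _).mpr ⟨y, hy⟩
      have h1 : p0 x = 0 := Subtype.ext h2
      show Efinal (p0 x) = 0
      rw [h1, map_zero]
  exact ⟨(QuotientAddGroup.quotientAddEquivOfEq hkerφ.symm).trans
    (QuotientAddGroup.quotientKerEquivOfSurjective φ hφsurj)⟩
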